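/- Let X₁,...,X_n be independent, zero-mean, and bounded |X_i| ≤ M almost surely. Then for every q ≥ 2, the L^q norm satisfies ||X₁ + ... + X_n||_q ≤ 6 sqrt(q · Σᵢ E[Xᵢ²]) + 4qM. -/

import Mathlib

open MeasureTheory ProbabilityTheory

lemma aux_exp_quad {x : ℝ} (h : |x| ≤ 1) : Real.exp x ≤ 1 + x + x ^ 2 := by
  have h2 := Real.exp_bound h (n := 2) (by norm_num)
  simp [Finset.sum_range_succ] at h2
  have := abs_le.1 h2
  have hx2 : |x| ^ 2 = x ^ 2 := sq_abs x
  nlinarith [sq_nonneg x]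

lemma aux_rpow_le {q l x : ℝ} (hq : 0 < q) (hl : 0 < l) (hx : 0 ≤ x) :
    x ^ q ≤ (q / (Real.exp 1 * l)) ^ q * Real.exp (l * x) := by
  rcases eq_or_lt_of_le hx with h0 | h0
  · rw [← h0, Real.zero_rpow hq.ne']
    positivity
  · have hc : 0 < q / (Real.exp 1 * l) := by positivity
    rw [Real.rpow_def_of_pos h0, Real.rpow_def_of_pos hc, ← Real.exp_add]
    apply Real.exp_le_exp.2
    have hy : 0 < l * x / q := by positivity
    have := Real.log_le_sub_one_of_pos hy
    rw [Real.log_div (by positivity) hq.ne', Real.log_mul hl.ne' h0.ne'] at this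
    have hlog : Real.log (q / (Real.exp 1 * l)) = Real.log q - 1 - Real.log l := by
      rw [Real.log_div hq.ne' (by positivity), Real.log_mul (Real.exp_pos 1).ne' hl.ne',
        Real.log_exp]
      ring
    rw [hlog]
    have hcancel : q * (l * x / q) = l * x := by field_simp
    nlinarith [mul_le_mul_of_nonneg_left this hq.le]

lemma aux_int_exp {Ω : Type*} [MeasureSpace Ω] [IsProbabilityMeasure (ℙ : Measure Ω)]
    {Y : Ω → ℝ} {M t : ℝ} (hmeas : Measurable Y) (hb : ∀ᵐ ω ∂ℙ, |Y ω| ≤ M) :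
    Integrable (fun ω => Real.exp (t * Y ω)) ℙ := by
  refine Integrable.mono' (integrable_const (Real.exp (|t| * M)))
    ((hmeas.const_mul t).exp.aestronglyMeasurable) ?_
  filter_upwards [hb] with ω h
  rw [Real.norm_eq_abs, Real.abs_exp]
  apply Real.exp_le_exp.2
  calc t * Y ω ≤ |t * Y ω| := le_abs_self _
    _ = |t| * |Y ω| := abs_mul _ _
    _ ≤ |t| * M := by gcongr

lemma aux_mgf_single {Ω : Type*} [MeasureSpace Ω] [IsProbabilityMeasure (ℙ : Measure Ω)]
    {Y : Ω → ℝ} {M t : ℝ} (hmeas : Measurable Y) (hmean : ∫ ω, Y ω ∂ℙ = 0)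
    (hb : ∀ᵐ ω ∂ℙ, |Y ω| ≤ M) (ht : |t| * M ≤ 1) :
    mgf Y ℙ t ≤ Real.exp (t ^ 2 * ∫ ω, (Y ω) ^ 2 ∂ℙ) := by
  have hY : Integrable Y ℙ := by
    refine Integrable.mono' (integrable_const M) hmeas.aestronglyMeasurable ?_
    filter_upwards [hb] with ω h
    rwa [Real.norm_eq_abs]
  have hY2 : Integrable (fun ω => (Y ω) ^ 2) ℙ := by
    refine Integrable.mono' (integrable_const (M ^ 2)) (hmeas.pow_const 2).aestronglyMeasurable ?_
    filter_upwards [hb] with ω h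
    rw [Real.norm_eq_abs, abs_pow, ← sq_abs M]
    exact pow_le_pow_left₀ (abs_nonneg _) (h.trans (le_abs_self M)) 2
  have h1 : mgf Y ℙ t ≤ ∫ ω, (1 + t * Y ω + t ^ 2 * (Y ω) ^ 2) ∂ℙ := by
    refine integral_mono_ae (aux_int_exp hmeas hb)
      (((integrable_const 1).add (hY.const_mul t)).add (hY2.const_mul (t ^ 2))) ?_
    filter_upwards [hb] with ω h
    have habs : |t * Y ω| ≤ 1 := by
      rw [abs_mul]
      refine le_trans ?_ ht
      gcongr
    have := aux_exp_quad habs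
    calc Real.exp (t * Y ω) ≤ 1 + t * Y ω + (t * Y ω) ^ 2 := this
      _ = 1 + t * Y ω + t ^ 2 * (Y ω) ^ 2 := by ring
  have h2 : ∫ ω, (1 + t * Y ω + t ^ 2 * (Y ω) ^ 2) ∂ℙ
      = 1 + t ^ 2 * ∫ ω, (Y ω) ^ 2 ∂ℙ := by
    have i1 : Integrable (fun ω => 1 + t * Y ω) ℙ := (integrable_const 1).add (hY.const_mul t)
    have i2 : Integrable (fun ω => t ^ 2 * (Y ω) ^ 2) ℙ := hY2.const_mul _
    rw [integral_add i1 i2, integral_add (integrable_const 1) (hY.const_mul t),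
      integral_const, integral_const_mul, integral_const_mul, hmean]
    simp
  rw [h2] at h1
  refine h1.trans ?_
  have := Real.add_one_le_exp (t ^ 2 * ∫ ω, (Y ω) ^ 2 ∂ℙ)
  linarith
theorem stmt_19 {n : ℕ} {Ω : Type*} [MeasureSpace Ω]
    [IsProbabilityMeasure (ℙ : Measure Ω)]
    (X : Fin n → Ω → ℝ) (M : ℝ) (hM : 0 ≤ M)
    (hmeas : ∀ i, Measurable (X i))
    (hindep : iIndepFun X ℙ)
    (hmean : ∀ i, ∫ ω, X i ω ∂ℙ = 0)
    (hbound : ∀ i, ∀ᵐ ω ∂ℙ, |X i ω| ≤ M)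
    (q : ℝ) (hq : 2 ≤ q) :
    (∫ ω, |∑ i, X i ω| ^ q ∂ℙ) ^ (1 / q)
      ≤ 6 * Real.sqrt (q * ∑ i, ∫ ω, (X i ω) ^ 2 ∂ℙ) + 4 * q * M := by
  have hq0 : (0:ℝ) < q := lt_of_lt_of_le two_pos hq
  rcases eq_or_lt_of_le hM with hM0 | hMpos
  · -- M = 0 : all variables vanish a.e.
    have hz : ∀ᵐ ω ∂ℙ, |∑ i, X i ω| ^ q = 0 := by
      have : ∀ᵐ ω ∂ℙ, ∀ i, |X i ω| ≤ M := ae_all_iff.2 hbound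
      filter_upwards [this] with ω h
      have : ∀ i, X i ω = 0 := fun i => by
        have := h i; rw [← hM0] at this; exact abs_eq_zero.1 (le_antisymm this (abs_nonneg _))
      rw [Finset.sum_congr rfl (fun i _ => this i), Finset.sum_const_zero, abs_zero,
        Real.zero_rpow hq0.ne']
    rw [integral_congr_ae hz, integral_zero, Real.zero_rpow (by positivity)]
    have : 4 * q * M = 0 := by rw [← hM0]; ring
    rw [this]
    positivity
  · set v := ∑ i, ∫ ω, (X i ω) ^ 2 ∂ℙ with hvdef
    have hv0 : 0 ≤ v := Finset.sum_nonneg fun i _ => integral_nonneg fun ω => sq_nonneg _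
    have hmgf : ∀ t : ℝ, |t| * M ≤ 1 →
        mgf (∑ i, X i) ℙ t ≤ Real.exp (t ^ 2 * v) := by
      intro t ht
      rw [hindep.mgf_sum hmeas]
      calc ∏ i, mgf (X i) ℙ t
          ≤ ∏ i, Real.exp (t ^ 2 * ∫ ω, (X i ω) ^ 2 ∂ℙ) :=
            Finset.prod_le_prod (fun i _ => mgf_nonneg)
              (fun i _ => aux_mgf_single (hmeas i) (hmean i) (hbound i) ht)
        _ = Real.exp (t ^ 2 * v) := by
            rw [← Real.exp_sum, hvdef, Finset.mul_sum]
    have hint : ∀ t : ℝ, Integrable (fun ω => Real.exp (t * (∑ i, X i) ω)) ℙ :=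
      fun t => hindep.integrable_exp_mul_sum hmeas
        (fun i _ => aux_int_exp (hmeas i) (hbound i))
    have hmgf_eq : ∀ t : ℝ, mgf (∑ i, X i) ℙ t = ∫ ω, Real.exp (t * ∑ i, X i ω) ∂ℙ := by
      intro t; simp [mgf, Finset.sum_apply]
    have hpow : (2:ℝ) ^ (1/q) ≤ 2 := by
      calc (2:ℝ) ^ (1/q) ≤ (2:ℝ) ^ (1:ℝ) :=
            Real.rpow_le_rpow_of_exponent_le one_le_two
              (by rw [div_le_one hq0]; linarith)
        _ = 2 := Real.rpow_one 2
    have hpow0 : (0:ℝ) < (2:ℝ) ^ (1/q) := by positivity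
    have hInt0 : 0 ≤ ∫ ω, |∑ i, X i ω| ^ q ∂ℙ :=
      integral_nonneg fun ω => Real.rpow_nonneg (abs_nonneg _) q
    -- key estimate for any admissible l
    have main : ∀ l : ℝ, 0 < l → l * M ≤ 1 →
        (∫ ω, |∑ i, X i ω| ^ q ∂ℙ) ^ (1/q)
          ≤ q / (Real.exp 1 * l) * (2 ^ (1/q)) * Real.exp (l ^ 2 * v * (1/q)) := by
      intro l hl hlM
      set c := (q / (Real.exp 1 * l)) ^ q with hc
      have hc0 : (0:ℝ) < q / (Real.exp 1 * l) := by positivity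
      have hI : ∫ ω, |∑ i, X i ω| ^ q ∂ℙ
          ≤ c * (2 * Real.exp (l ^ 2 * v)) := by
        have step1 : ∫ ω, |∑ i, X i ω| ^ q ∂ℙ
            ≤ ∫ ω, c * (Real.exp (l * ∑ i, X i ω) + Real.exp (-l * ∑ i, X i ω)) ∂ℙ := by
          refine integral_mono_of_nonneg
            (Filter.Eventually.of_forall fun ω => Real.rpow_nonneg (abs_nonneg _) q)
            ?_ (Filter.Eventually.of_forall fun ω => ?_)
          · have := ((hint l).add (hint (-l))).const_mul c
            simpa [Finset.sum_apply, neg_mul] using this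
          · set s := ∑ i, X i ω with hs
            have h1 : |s| ^ q ≤ c * Real.exp (l * |s|) :=
              aux_rpow_le hq0 hl (abs_nonneg s)
            refine h1.trans ?_
            have hcpos : (0:ℝ) ≤ c := by positivity
            have : Real.exp (l * |s|) ≤ Real.exp (l * s) + Real.exp (-l * s) := by
              rcases abs_cases s with ⟨h, _⟩ | ⟨h, _⟩
              · rw [h]; exact le_add_of_nonneg_right (Real.exp_pos _).le
              · rw [h, mul_neg, ← neg_mul]
                exact le_add_of_nonneg_left (Real.exp_pos _).le
            exact mul_le_mul_of_nonneg_left this hcpos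
        have step2 : ∫ ω, c * (Real.exp (l * ∑ i, X i ω) + Real.exp (-l * ∑ i, X i ω)) ∂ℙ
            = c * (mgf (∑ i, X i) ℙ l + mgf (∑ i, X i) ℙ (-l)) := by
          rw [hmgf_eq, hmgf_eq]
          rw [integral_const_mul]
          congr 1
          have i1 : Integrable (fun ω => Real.exp (l * ∑ i, X i ω)) ℙ := by
            simpa [Finset.sum_apply] using hint l
          have i2 : Integrable (fun ω => Real.exp (-l * ∑ i, X i ω)) ℙ := by
            simpa [Finset.sum_apply, neg_mul] using hint (-l)
          rw [integral_add i1 i2]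
        have hm1 : mgf (∑ i, X i) ℙ l ≤ Real.exp (l ^ 2 * v) :=
          hmgf l (by rwa [abs_of_pos hl])
        have hm2 : mgf (∑ i, X i) ℙ (-l) ≤ Real.exp (l ^ 2 * v) := by
          have := hmgf (-l) (by rwa [abs_neg, abs_of_pos hl])
          simpa [neg_pow] using this
        rw [step2] at step1
        refine step1.trans ?_
        have hcpos : (0:ℝ) ≤ c := by positivity
        nlinarith [hm1, hm2]
      calc (∫ ω, |∑ i, X i ω| ^ q ∂ℙ) ^ (1/q)
          ≤ (c * (2 * Real.exp (l ^ 2 * v))) ^ (1/q) :=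
            Real.rpow_le_rpow hInt0 hI (by positivity)
        _ = q / (Real.exp 1 * l) * (2 ^ (1/q)) * Real.exp (l ^ 2 * v * (1/q)) := by
            rw [Real.mul_rpow (by positivity) (by positivity),
              Real.mul_rpow (by positivity) (Real.exp_pos _).le, hc,
              ← Real.rpow_mul hc0.le, mul_one_div_cancel hq0.ne', Real.rpow_one,
              ← Real.exp_mul]
            ring
    rcases le_or_gt (q * M ^ 2) v with hcase | hcase
    · -- sub-Gaussian regime : l = sqrt (q / v)
      have hvpos : 0 < v := lt_of_lt_of_le (by positivity) hcase
      set l := Real.sqrt (q / v) with hldef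
      have hl : 0 < l := Real.sqrt_pos.2 (by positivity)
      have hl2 : l ^ 2 = q / v := Real.sq_sqrt (by positivity)
      have hlM : l * M ≤ 1 := by
        have h1 : l ^ 2 * M ^ 2 ≤ 1 := by
          rw [hl2, div_mul_eq_mul_div, div_le_one hvpos]
          linarith
        nlinarith [mul_pos hl hMpos, sq_nonneg (l * M - 1)]
      have key := main l hl hlM
      have hexp : l ^ 2 * v * (1 / q) = 1 := by rw [hl2]; field_simp
      rw [hexp] at key
      have hql : q / l = Real.sqrt (q * v) := by
        rw [div_eq_iff hl.ne', hldef, ← Real.sqrt_mul (by positivity)]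
        have : q * v * (q / v) = q ^ 2 := by field_simp
        rw [this, Real.sqrt_sq hq0.le]
      have hsimp : q / (Real.exp 1 * l) * 2 ^ (1 / q) * Real.exp 1
          = Real.sqrt (q * v) * 2 ^ (1 / q) := by
        rw [← hql]
        field_simp
      rw [hsimp] at key
      refine key.trans ?_
      have hs : 0 ≤ Real.sqrt (q * v) := Real.sqrt_nonneg _
      have hqM : 0 ≤ q * M := by positivity
      nlinarith [mul_le_mul_of_nonneg_left hpow hs]
    · -- bounded regime : l = 1 / M
      have hl : 0 < 1 / M := by positivity
      have hlM : (1 / M) * M ≤ 1 := le_of_eq (one_div_mul_cancel hMpos.ne')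
      have key := main (1 / M) hl hlM
      have hd : (1 / M) ^ 2 * v * (1 / q) ≤ 1 := by
        have heq : (1 / M) ^ 2 * v * (1 / q) = v / (M ^ 2 * q) := by
          field_simp
        rw [heq, div_le_one (by positivity)]
        nlinarith
      have key2 : q / (Real.exp 1 * (1 / M)) * 2 ^ (1 / q) * Real.exp ((1 / M) ^ 2 * v * (1 / q))
          ≤ q / (Real.exp 1 * (1 / M)) * 2 ^ (1 / q) * Real.exp 1 := by
        have : Real.exp ((1 / M) ^ 2 * v * (1 / q)) ≤ Real.exp 1 := Real.exp_le_exp.2 hd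
        have hA : 0 ≤ q / (Real.exp 1 * (1 / M)) * 2 ^ (1 / q) := by positivity
        exact mul_le_mul_of_nonneg_left this hA
      have hsimp : q / (Real.exp 1 * (1 / M)) * 2 ^ (1 / q) * Real.exp 1
          = q * M * 2 ^ (1 / q) := by
        field_simp
      rw [hsimp] at key2
      refine (key.trans key2).trans ?_
      have hs : 0 ≤ Real.sqrt (q * v) := Real.sqrt_nonneg _
      have hqM : 0 ≤ q * M := by positivity
      nlinarith [mul_le_mul_of_nonneg_left hpow hqM]
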